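/- The only strongly continuous semigroup of positive (entrywise nonnegative) matrices (T(t))_{t≥0} with T(1) = I is the trivial one, T(t) = I for all t ≥ 0. -/

import Mathlib

lemma pow_entry_nonneg' {d : ℕ} {S : Matrix (Fin d) (Fin d) ℝ}
    (hS : ∀ i j, 0 ≤ S i j) : ∀ (k : ℕ) (i j : Fin d), 0 ≤ (S ^ k) i j := by
  intro k
  induction k with
  | zero =>
    intro i j
    by_cases h : i = j <;> simp [pow_zero, Matrix.one_apply, h]
  | succ k ih =>
    intro i j
    rw [pow_succ, Matrix.mul_apply]
    exact Finset.sum_nonneg fun l _ => mul_nonneg (ih i l) (hS l j)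

lemma pow_entry_ge' {d : ℕ} {S : Matrix (Fin d) (Fin d) ℝ}
    (hS : ∀ i j, 0 ≤ S i j) (i j : Fin d) :
    ∀ k : ℕ, S i j * S j j ^ k ≤ (S ^ (k + 1)) i j := by
  intro k
  induction k with
  | zero => simp
  | succ k ih =>
    have h1 : (S ^ (k + 2)) i j = ∑ l, (S ^ (k + 1)) i l * S l j := by
      rw [pow_succ, Matrix.mul_apply]
    rw [h1]
    have h2 : (S ^ (k + 1)) i j * S j j ≤ ∑ l, (S ^ (k + 1)) i l * S l j :=
      Finset.single_le_sum
        (f := fun l => (S ^ (k + 1)) i l * S l j)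
        (fun l _ => mul_nonneg (pow_entry_nonneg' hS _ i l) (hS l j))
        (Finset.mem_univ j)
    calc S i j * S j j ^ (k + 1) = (S i j * S j j ^ k) * S j j := by ring
      _ ≤ (S ^ (k + 1)) i j * S j j := mul_le_mul_of_nonneg_right ih (hS j j)
      _ ≤ _ := h2

lemma root_eq_one' {d n : ℕ} {S : Matrix (Fin d) (Fin d) ℝ}
    (hS : ∀ i j, 0 ≤ S i j) (hdiag : ∀ i, 0 < S i i) (hn : 1 ≤ n)
    (h : S ^ n = 1) : S = 1 := by
  have hoff : ∀ i j, i ≠ j → S i j = 0 := by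
    intro i j hij
    by_contra hne
    have hpos : 0 < S i j := lt_of_le_of_ne (hS i j) (Ne.symm hne)
    obtain ⟨k, rfl⟩ : ∃ k, n = k + 1 := ⟨n - 1, by omega⟩
    have hle := pow_entry_ge' hS i j k
    rw [h] at hle
    have h1 : (1 : Matrix (Fin d) (Fin d) ℝ) i j = 0 := by
      simp [Matrix.one_apply, hij]
    rw [h1] at hle
    nlinarith [pow_pos (hdiag j) k]
  have hdiagpow : ∀ (k : ℕ) (i : Fin d), (S ^ k) i i = S i i ^ k := by
    intro k
    induction k with
    | zero => intro i; simp [Matrix.one_apply]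
    | succ k ih =>
      intro i
      rw [pow_succ, Matrix.mul_apply, Finset.sum_eq_single i]
      · rw [ih, pow_succ]
      · intro l _ hl; rw [hoff l i hl, mul_zero]
      · intro habs; exact absurd (Finset.mem_univ i) habs
  ext i j
  by_cases hij : i = j
  · subst hij
    have hpow : S i i ^ n = 1 := by
      have := hdiagpow n i
      rw [h] at this
      simp [Matrix.one_apply] at this
      linarith
    have : S i i = 1 := by
      have hinj := (pow_left_strictMonoOn₀ (M₀ := ℝ) (n := n) (by omega)).injOn
      refine hinj (le_of_lt (hdiag i)) (by norm_num : (0:ℝ) ≤ 1) ?_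
      simp [hpow]
    simp [this, Matrix.one_apply]
  · simp [hoff i j hij, Matrix.one_apply, hij]

/-- The only strongly continuous semigroup of positive (entrywise nonnegative)
matrices `(T(t))_{t ≥ 0}` with `T(1) = I` is the trivial one: `T(t) = I` for all
`t ≥ 0`. -/
theorem stmt_15 {d : ℕ} (T : ℝ → Matrix (Fin d) (Fin d) ℝ)
    (h0 : T 0 = 1)
    (hsem : ∀ t s : ℝ, 0 ≤ t → 0 ≤ s → T (t + s) = T t * T s)
    (hpos : ∀ t : ℝ, 0 ≤ t → ∀ i j, 0 ≤ T t i j)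
    (hcont : ∀ i j : Fin d, ContinuousOn (fun t : ℝ => T t i j) (Set.Ici 0))
    (h1 : T 1 = 1) :
    ∀ t : ℝ, 0 ≤ t → T t = 1 := by
  -- T of natural multiples
  have Tpow : ∀ (n : ℕ) (t : ℝ), 0 ≤ t → T ((n : ℝ) * t) = T t ^ n := by
    intro n
    induction n with
    | zero => intro t ht; simpa using h0
    | succ n ih =>
      intro t ht
      have hc : ((n : ℝ) + 1) * t = (n : ℝ) * t + t := by ring
      rw [Nat.cast_succ, hc, hsem _ _ (mul_nonneg (Nat.cast_nonneg n) ht) ht,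
        ih t ht, pow_succ]
  have Tnat : ∀ k : ℕ, T (k : ℝ) = 1 := by
    intro k
    have := Tpow k 1 zero_le_one
    simpa [h1] using this
  -- positivity of diagonal near 0
  have hev : ∀ᶠ t in nhdsWithin (0 : ℝ) (Set.Ici 0), ∀ i, 0 < T t i i := by
    rw [Filter.eventually_all]
    intro i
    have hc : Filter.Tendsto (fun t : ℝ => T t i i) (nhdsWithin 0 (Set.Ici 0))
        (nhds (T 0 i i)) := hcont i i 0 Set.self_mem_Ici
    have h00 : T 0 i i = 1 := by rw [h0]; simp [Matrix.one_apply]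
    exact hc.eventually (by rw [h00]; exact eventually_gt_nhds one_pos)
  obtain ⟨δ, hδpos, hδ⟩ :
      ∃ δ, 0 < δ ∧ Set.Icc (0:ℝ) δ ⊆ {t | ∀ i, 0 < T t i i} :=
    mem_nhdsGE_iff_exists_Icc_subset.mp hev
  have hdiagpos : ∀ t : ℝ, 0 ≤ t → t ≤ δ → ∀ i, 0 < T t i i := by
    intro t h1t h2t i
    exact hδ ⟨h1t, h2t⟩ i
  -- T of nonnegative rationals is 1
  have Trat : ∀ q : ℚ, 0 ≤ q → T (q : ℝ) = 1 := by
    intro q hq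
    obtain ⟨m, hm⟩ := exists_nat_gt ((q : ℝ) / δ)
    set r : ℚ := q / (m + 1) with hr
    have hr0 : 0 ≤ r := by positivity
    have hr0' : (0 : ℝ) ≤ (r : ℝ) := by exact_mod_cast hr0
    have hrδ : (r : ℝ) ≤ δ := by
      have hq' : (q : ℝ) < ((m : ℝ) + 1) * δ := by
        have : (q : ℝ) / δ < (m : ℝ) + 1 := lt_of_lt_of_le hm (by linarith)
        calc (q : ℝ) = ((q : ℝ) / δ) * δ := by field_simp
          _ < ((m : ℝ) + 1) * δ := by
              exact mul_lt_mul_of_pos_right this hδpos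
      have : (r : ℝ) = (q : ℝ) / ((m : ℝ) + 1) := by push_cast [hr]; ring
      rw [this, div_le_iff₀ (by positivity)]
      linarith
    -- T r is an r.den-th root of 1
    have hden : ((r.den : ℝ)) * (r : ℝ) = ((r.num.toNat : ℕ) : ℝ) := by
      have h1' : ((r * (r.den : ℚ) : ℚ) : ℝ) = ((r.num : ℚ) : ℝ) :=
        congrArg (fun x : ℚ => (x : ℝ)) (Rat.mul_den_eq_num r)
      have h2' : ((r.num.toNat : ℕ) : ℝ) = ((r.num : ℤ) : ℝ) := by
        exact_mod_cast congrArg (fun x : ℤ => (x : ℝ)) (Int.toNat_of_nonneg (Rat.num_nonneg.mpr hr0))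
      push_cast at h1'
      rw [h2']
      linarith
    have hTrpow : T (r : ℝ) ^ r.den = 1 := by
      rw [← Tpow r.den (r : ℝ) hr0', hden, Tnat]
    have hTr : T (r : ℝ) = 1 :=
      root_eq_one' (hpos _ hr0') (hdiagpos _ hr0' hrδ) r.pos hTrpow
    have hqr : (q : ℝ) = ((m + 1 : ℕ) : ℝ) * (r : ℝ) := by
      push_cast [hr]
      field_simp
    rw [hqr, Tpow _ _ hr0', hTr, one_pow]
  -- general t by continuity at 0
  intro t ht
  rcases ht.eq_or_lt with h | htpos
  · rw [← h]; exact h0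
  · have key : ∀ n : ℕ, ∃ q : ℚ, max (t - 1 / (n + 1)) (t / 2) < q ∧ (q : ℝ) < t := by
      intro n
      apply exists_rat_btwn
      apply max_lt
      · have : (0 : ℝ) < 1 / (n + 1) := by positivity
        linarith
      · linarith
    choose q hq1 hq2 using key
    have hs0 : ∀ n, 0 ≤ t - (q n : ℝ) := fun n => by linarith [hq2 n]
    have hq0 : ∀ n, 0 ≤ q n := by
      intro n
      have h1' : t / 2 < (q n : ℝ) := lt_of_le_of_lt (le_max_right _ _) (hq1 n)
      have : (0 : ℝ) ≤ (q n : ℝ) := by linarith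
      exact_mod_cast this
    have hq0' : ∀ n, (0 : ℝ) ≤ (q n : ℝ) := fun n => by exact_mod_cast hq0 n
    have hconst : ∀ n, T (t - (q n : ℝ)) = T t := by
      intro n
      conv_rhs => rw [show t = (q n : ℝ) + (t - (q n : ℝ)) by ring]
      rw [hsem _ _ (hq0' n) (hs0 n), Trat _ (hq0 n), one_mul]
    have hlim : Filter.Tendsto (fun n : ℕ => t - (q n : ℝ)) Filter.atTop
        (nhdsWithin 0 (Set.Ici 0)) := by
      rw [tendsto_nhdsWithin_iff]
      constructor
      · apply squeeze_zero hs0 (fun n => ?_) tendsto_one_div_add_atTop_nhds_zero_nat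
        have := lt_of_le_of_lt (le_max_left _ _) (hq1 n)
        linarith
      · exact Filter.Eventually.of_forall hs0
    ext i j
    have hc : Filter.Tendsto (fun s : ℝ => T s i j) (nhdsWithin 0 (Set.Ici 0))
        (nhds (T 0 i j)) := hcont i j 0 Set.self_mem_Ici
    have hlim2 : Filter.Tendsto (fun n : ℕ => T (t - (q n : ℝ)) i j) Filter.atTop
        (nhds (T 0 i j)) := hc.comp hlim
    have hlim3 : Filter.Tendsto (fun _ : ℕ => T t i j) Filter.atTop (nhds (T 0 i j)) := by
      simpa only [hconst] using hlim2
    have := tendsto_nhds_unique hlim3 tendsto_const_nhds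
    rw [← this, h0]
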